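/- Let n and δ be positive integers and let p be a multilinear Littlewood polynomial on n variables whose monomials all have size at most δ, with w ≥ 1 monomials. Then the fraction of points x ∈ {−1,+1}^n at which |p(x)| > (1/2)·√w is at least (9/16) · 9^{−δ}; consequently 2^{−n} · ∑_{x ∈ {−1,+1}^n} |p(x)| ≥ (9/32) · 9^{−δ} · √w. -/

import Mathlib

open Finset

namespace LPZ

variable {ι : Type*} [DecidableEq ι] [Fintype ι]

noncomputable def eps (b : Bool) : ℝ := if b then 1 else -1

noncomputable def chi (S : Finset ι) (s : ι → Bool) : ℝ := ∏ i ∈ S, eps (s i)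

lemma eps_sq (b : Bool) : eps b ^ 2 = 1 := by cases b <;> simp [eps]

lemma eps_not (b : Bool) : eps (!b) = - eps b := by cases b <;> simp [eps]

def flip (a : ι) (s : ι → Bool) : ι → Bool := Function.update s a (!(s a))

lemma flip_involutive (a : ι) : Function.Involutive (flip a) := by
  intro s
  funext i
  by_cases h : i = a
  · subst h; simp [flip]
  · simp [flip, Function.update_of_ne h]

lemma flip_apply_self (a : ι) (s : ι → Bool) : flip a s a = !(s a) :=
  Function.update_self _ _ _

lemma flip_apply_ne {a i : ι} (h : i ≠ a) (s : ι → Bool) : flip a s i = s i :=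
  Function.update_of_ne h _ _

lemma chi_flip {S : Finset ι} {a : ι} (ha : a ∉ S) (s : ι → Bool) :
    chi S (flip a s) = chi S s := by
  unfold chi
  refine Finset.prod_congr rfl fun i hi => ?_
  rw [flip_apply_ne (fun h : i = a => ha (by rwa [h] at hi)) s]

lemma sum_flip_zero (a : ι) (F : (ι → Bool) → ℝ) (h : ∀ s, F (flip a s) = -F s) :
    ∑ s : ι → Bool, F s = 0 := by
  have h1 : ∑ s : ι → Bool, F (flip a s) = ∑ s : ι → Bool, F s :=
    Equiv.sum_comp ((flip_involutive a).toPerm) F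
  have h2 : ∑ s : ι → Bool, F (flip a s) = -∑ s : ι → Bool, F s := by
    simp [h]
  linarith

lemma chi_flip_mem {W : Finset ι} {a : ι} (ha : a ∈ W) (s : ι → Bool) :
    chi W (flip a s) = - chi W s := by
  unfold chi
  rw [← Finset.mul_prod_erase W (fun i => eps (flip a s i)) ha,
    ← Finset.mul_prod_erase W (fun i => eps (s i)) ha]
  have h2 : ∀ i ∈ W.erase a, eps (flip a s i) = eps (s i) := fun i hi => by
    rw [flip_apply_ne (Finset.ne_of_mem_erase hi) s]
  rw [Finset.prod_congr rfl h2, flip_apply_self, eps_not]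
  ring

lemma sum_chi_eq_zero {W : Finset ι} (hW : W.Nonempty) :
    ∑ s : ι → Bool, chi W s = 0 := by
  obtain ⟨a, ha⟩ := hW
  exact sum_flip_zero a _ (fun s => chi_flip_mem ha s)

lemma chi_mul (S T : Finset ι) (s : ι → Bool) :
    chi S s * chi T s = chi (symmDiff S T) s := by
  unfold chi
  have hS : (∏ i ∈ S, eps (s i)) =
      (∏ i ∈ S \ T, eps (s i)) * ∏ i ∈ S ∩ T, eps (s i) := by
    rw [← Finset.prod_union (Finset.disjoint_sdiff_inter S T), Finset.sdiff_union_inter]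
  have hT : (∏ i ∈ T, eps (s i)) =
      (∏ i ∈ T \ S, eps (s i)) * ∏ i ∈ S ∩ T, eps (s i) := by
    rw [Finset.inter_comm S T,
      ← Finset.prod_union (Finset.disjoint_sdiff_inter T S), Finset.sdiff_union_inter]
  have hsd : symmDiff S T = (S \ T) ∪ (T \ S) := symmDiff_def S T
  rw [hS, hT, hsd, Finset.prod_union disjoint_sdiff_sdiff]
  have h1 : (∏ i ∈ S ∩ T, eps (s i)) * ∏ i ∈ S ∩ T, eps (s i) = 1 := by
    rw [← sq, ← Finset.prod_pow]
    simp [eps_sq]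
  calc ((∏ i ∈ S \ T, eps (s i)) * ∏ i ∈ S ∩ T, eps (s i)) *
      ((∏ i ∈ T \ S, eps (s i)) * ∏ i ∈ S ∩ T, eps (s i))
      = ((∏ i ∈ S \ T, eps (s i)) * ∏ i ∈ T \ S, eps (s i)) *
        ((∏ i ∈ S ∩ T, eps (s i)) * ∏ i ∈ S ∩ T, eps (s i)) := by ring
    _ = _ := by rw [h1, mul_one]

lemma sum_chi_mul (S T : Finset ι) :
    ∑ s : ι → Bool, chi S s * chi T s =
      if S = T then (2:ℝ) ^ Fintype.card ι else 0 := by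
  simp only [chi_mul]
  by_cases h : S = T
  · subst h
    rw [if_pos rfl]
    have : symmDiff S S = ∅ := symmDiff_self S
    simp [this, chi, Finset.card_univ]
  · rw [if_neg h, sum_chi_eq_zero]
    rw [Finset.nonempty_iff_ne_empty]
    intro hc
    exact h (symmDiff_eq_bot.1 hc)

lemma parseval (F : Finset (Finset ι)) (c : Finset ι → ℝ) :
    ∑ s : ι → Bool, (∑ S ∈ F, c S * chi S s) ^ 2 =
      (2:ℝ) ^ Fintype.card ι * ∑ S ∈ F, c S ^ 2 := by
  have key : ∀ s : ι → Bool, (∑ S ∈ F, c S * chi S s) ^ 2 =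
      ∑ S ∈ F, ∑ T ∈ F, (c S * c T) * (chi S s * chi T s) := by
    intro s
    rw [sq, Finset.sum_mul_sum]
    exact Finset.sum_congr rfl fun S _ => Finset.sum_congr rfl fun T _ => by ring
  simp only [key]
  rw [Finset.sum_comm]
  have inner : ∀ S ∈ F, (∑ s : ι → Bool, ∑ T ∈ F, c S * c T * (chi S s * chi T s))
      = (2:ℝ) ^ Fintype.card ι * c S ^ 2 := by
    intro S hS
    rw [Finset.sum_comm]
    have : ∀ T ∈ F, ∑ s : ι → Bool, c S * c T * (chi S s * chi T s)
        = c S * c T * (if S = T then (2:ℝ) ^ Fintype.card ι else 0) := by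
      intro T _
      rw [← Finset.mul_sum, sum_chi_mul]
    rw [Finset.sum_congr rfl this]
    simp only [mul_ite, mul_zero]
    rw [Finset.sum_ite_eq F S (fun T => c S * c T * (2:ℝ) ^ Fintype.card ι), if_pos hS]
    ring
  rw [Finset.sum_congr rfl inner, ← Finset.mul_sum]

lemma pow_le_of_sq_le_sq {a b : ℝ} (ha : 0 ≤ a) (hb : 0 ≤ b) (h : a ^ 2 ≤ b ^ 2) :
    a ≤ b := by nlinarith

lemma hyper (A : Finset ι) (δ : ℕ) (c : Finset ι → ℝ)
    (hc : ∀ S ∈ A.powerset, c S ≠ 0 → S.card ≤ δ) :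
    ∑ s : ι → Bool, (∑ S ∈ A.powerset, c S * chi S s) ^ 4 ≤
      9 ^ δ * 2 ^ Fintype.card ι * (∑ S ∈ A.powerset, c S ^ 2) ^ 2 := by
  induction A using Finset.induction generalizing δ c with
  | empty =>
    simp only [Finset.powerset_empty, Finset.sum_singleton, chi, Finset.prod_empty, mul_one]
    rw [Finset.sum_const, nsmul_eq_mul, Finset.card_univ, Fintype.card_fun,
      Fintype.card_bool]
    push_cast
    have h9 : (1:ℝ) ≤ 9 ^ δ := one_le_pow₀ (by norm_num)
    have hpos : (0:ℝ) ≤ 2 ^ Fintype.card ι * c ∅ ^ 4 := by positivity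
    calc (2:ℝ) ^ Fintype.card ι * c ∅ ^ 4
        = 1 * (2 ^ Fintype.card ι * c ∅ ^ 4) := by ring
      _ ≤ 9 ^ δ * (2 ^ Fintype.card ι * c ∅ ^ 4) := mul_le_mul_of_nonneg_right h9 hpos
      _ = 9 ^ δ * 2 ^ Fintype.card ι * (c ∅ ^ 2) ^ 2 := by ring
  | @insert a A' ha IH =>
    set N := Fintype.card ι with hN
    -- basic set facts
    have hdisj : Disjoint A'.powerset (A'.powerset.image (insert a)) := by
      rw [Finset.disjoint_left]
      intro S hS hS'
      obtain ⟨T, hT, rfl⟩ := Finset.mem_image.1 hS'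
      exact ha (Finset.mem_powerset.1 hS (Finset.mem_insert_self a T))
    have hinj : Set.InjOn (insert a) (A'.powerset : Set (Finset ι)) := by
      intro x hx y hy hxy
      have hax : a ∉ x := fun h => ha (Finset.mem_powerset.1 (Finset.mem_coe.1 hx) h)
      have hay : a ∉ y := fun h => ha (Finset.mem_powerset.1 (Finset.mem_coe.1 hy) h)
      rw [← Finset.erase_insert hax, ← Finset.erase_insert hay, hxy]
    have hnotmem : ∀ S ∈ A'.powerset, a ∉ S := fun S hS h =>
      ha (Finset.mem_powerset.1 hS h)
    set g : (ι → Bool) → ℝ := fun s => ∑ S ∈ A'.powerset, c S * chi S s with hgdef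
    set h : (ι → Bool) → ℝ := fun s => ∑ S ∈ A'.powerset, c (insert a S) * chi S s with hhdef
    have hsplit : ∀ s : ι → Bool,
        ∑ S ∈ (insert a A').powerset, c S * chi S s = g s + eps (s a) * h s := by
      intro s
      rw [Finset.powerset_insert, Finset.sum_union hdisj, Finset.sum_image hinj]
      congr 1
      rw [hhdef, Finset.mul_sum]
      refine Finset.sum_congr rfl fun S hS => ?_
      have haS : a ∉ S := hnotmem S hS
      show c (insert a S) * chi (insert a S) s = eps (s a) * (c (insert a S) * chi S s)
      unfold chi
      rw [Finset.prod_insert haS]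
      ring
    have hcsplit : ∑ S ∈ (insert a A').powerset, c S ^ 2 =
        (∑ S ∈ A'.powerset, c S ^ 2) + ∑ S ∈ A'.powerset, c (insert a S) ^ 2 := by
      rw [Finset.powerset_insert, Finset.sum_union hdisj, Finset.sum_image hinj]
    -- invariances
    have hgflip : ∀ s, g (flip a s) = g s := by
      intro s
      exact Finset.sum_congr rfl fun S hS => by rw [chi_flip (hnotmem S hS)]
    have hhflip : ∀ s, h (flip a s) = h s := by
      intro s
      exact Finset.sum_congr rfl fun S hS => by rw [chi_flip (hnotmem S hS)]
    -- expansion of fourth power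
    have hptwise : ∀ s : ι → Bool, (g s + eps (s a) * h s) ^ 4 =
        (g s ^ 4 + 6 * g s ^ 2 * h s ^ 2 + h s ^ 4) +
          eps (s a) * (4 * g s ^ 3 * h s + 4 * g s * h s ^ 3) := by
      intro s
      cases hsa : s a <;> simp [eps] <;> ring
    have hodd : ∑ s : ι → Bool,
        eps (s a) * (4 * g s ^ 3 * h s + 4 * g s * h s ^ 3) = 0 := by
      refine sum_flip_zero a _ fun s => ?_
      rw [hgflip, hhflip, flip_apply_self, eps_not]
      ring
    have hsum4 : ∑ s : ι → Bool, (∑ S ∈ (insert a A').powerset, c S * chi S s) ^ 4 =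
        (∑ s : ι → Bool, g s ^ 4) + 6 * (∑ s : ι → Bool, g s ^ 2 * h s ^ 2) +
          ∑ s : ι → Bool, h s ^ 4 := by
      simp only [hsplit, hptwise]
      rw [Finset.sum_add_distrib, hodd, add_zero, Finset.sum_add_distrib,
        Finset.sum_add_distrib]
      have h6 : ∑ x : ι → Bool, 6 * g x ^ 2 * h x ^ 2 =
          6 * ∑ x : ι → Bool, g x ^ 2 * h x ^ 2 := by
        rw [Finset.mul_sum]
        exact Finset.sum_congr rfl fun x _ => by ring
      rw [h6]
    -- abbreviations
    set Cg : ℝ := ∑ S ∈ A'.powerset, c S ^ 2 with hCg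
    set Ch : ℝ := ∑ S ∈ A'.powerset, c (insert a S) ^ 2 with hCh
    have hCgnn : 0 ≤ Cg := Finset.sum_nonneg fun S _ => sq_nonneg _
    have hChnn : 0 ≤ Ch := Finset.sum_nonneg fun S _ => sq_nonneg _
    have hg4nn : 0 ≤ ∑ s : ι → Bool, g s ^ 4 :=
      Finset.sum_nonneg fun s _ => by positivity
    have hh4nn : 0 ≤ ∑ s : ι → Bool, h s ^ 4 :=
      Finset.sum_nonneg fun s _ => by positivity
    have hgh2nn : 0 ≤ ∑ s : ι → Bool, g s ^ 2 * h s ^ 2 :=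
      Finset.sum_nonneg fun s _ => by positivity
    have h2Nnn : (0:ℝ) < 2 ^ N := by positivity
    -- IH for g
    have Hg : ∑ s : ι → Bool, g s ^ 4 ≤ 9 ^ δ * 2 ^ N * Cg ^ 2 := by
      refine IH δ c fun S hS hcS => hc S ?_ hcS
      rw [Finset.mem_powerset] at hS ⊢
      exact hS.trans (Finset.subset_insert a A')
    -- Cauchy-Schwarz for cross term
    have hCS : (∑ s : ι → Bool, g s ^ 2 * h s ^ 2) ^ 2 ≤
        (∑ s : ι → Bool, g s ^ 4) * ∑ s : ι → Bool, h s ^ 4 := by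
      have := Finset.sum_mul_sq_le_sq_mul_sq Finset.univ (fun s => g s ^ 2)
        (fun s => h s ^ 2)
      calc (∑ s : ι → Bool, g s ^ 2 * h s ^ 2) ^ 2
          ≤ (∑ s : ι → Bool, (g s ^ 2) ^ 2) * ∑ s : ι → Bool, (h s ^ 2) ^ 2 := this
        _ = (∑ s : ι → Bool, g s ^ 4) * ∑ s : ι → Bool, h s ^ 4 := by
            norm_num [← pow_mul]
    rcases Nat.eq_zero_or_pos δ with hδ0 | hδpos
    · -- δ = 0 : h vanishes
      subst hδ0
      have hzero : ∀ S ∈ A'.powerset, c (insert a S) = 0 := by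
        intro S hS
        by_contra hne
        have hmem : insert a S ∈ (insert a A').powerset := by
          rw [Finset.mem_powerset]
          exact Finset.insert_subset_insert a (Finset.mem_powerset.1 hS)
        have := hc _ hmem hne
        simp [Finset.card_insert_of_notMem (hnotmem S hS)] at this
      have hh0 : ∀ s, h s = 0 := fun s =>
        Finset.sum_eq_zero fun S hS => by rw [hzero S hS, zero_mul]
      have hCh0 : Ch = 0 := Finset.sum_eq_zero fun S hS => by rw [hzero S hS]; ring
      rw [hsum4, hcsplit, hCh0, add_zero]
      simp only [hh0]
      simpa using Hg
    · -- δ ≥ 1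
      obtain ⟨m, rfl⟩ : ∃ m, δ = m + 1 := ⟨δ - 1, (Nat.succ_pred_eq_of_pos hδpos).symm⟩
      have Hh : ∑ s : ι → Bool, h s ^ 4 ≤ 9 ^ m * 2 ^ N * Ch ^ 2 := by
        refine IH m (fun S => c (insert a S)) fun S hS hcS => ?_
        have hmem : insert a S ∈ (insert a A').powerset := by
          rw [Finset.mem_powerset]
          exact Finset.insert_subset_insert a (Finset.mem_powerset.1 hS)
        have := hc _ hmem hcS
        rw [Finset.card_insert_of_notMem (hnotmem S hS)] at this
        omega
      have hcross : ∑ s : ι → Bool, g s ^ 2 * h s ^ 2 ≤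
          3 ^ (2 * m + 1) * 2 ^ N * (Cg * Ch) := by
        refine pow_le_of_sq_le_sq hgh2nn (by positivity) ?_
        calc (∑ s : ι → Bool, g s ^ 2 * h s ^ 2) ^ 2
            ≤ (∑ s : ι → Bool, g s ^ 4) * ∑ s : ι → Bool, h s ^ 4 := hCS
          _ ≤ (9 ^ (m + 1) * 2 ^ N * Cg ^ 2) * (9 ^ m * 2 ^ N * Ch ^ 2) := by
              apply mul_le_mul Hg Hh hh4nn (by positivity)
          _ = (3 ^ (2 * m + 1) * 2 ^ N * (Cg * Ch)) ^ 2 := by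
              rw [show (9:ℝ) = 3 ^ 2 by norm_num, ← pow_mul, ← pow_mul]
              ring
      have h9eq : (9:ℝ) ^ (m + 1) = 3 * 3 ^ (2 * m + 1) := by
        rw [show (9:ℝ) = 3 ^ 2 by norm_num, ← pow_mul]
        rw [show 2 * (m + 1) = (2 * m + 1) + 1 by ring, pow_succ]
        ring
      have h9m : (9:ℝ) ^ m * 9 = 9 ^ (m + 1) := (pow_succ 9 m).symm
      rw [hsum4, hcsplit]
      have key : 9 ^ (m+1) * 2 ^ N * Cg ^ 2 + 6 * (3 ^ (2*m+1) * 2 ^ N * (Cg * Ch)) +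
          9 ^ m * 2 ^ N * Ch ^ 2 ≤ 9 ^ (m+1) * 2 ^ N * (Cg + Ch) ^ 2 := by
        have hCh2 : 9 ^ m * 2 ^ N * Ch ^ 2 ≤ 9 ^ (m+1) * 2 ^ N * Ch ^ 2 := by
          have : (9:ℝ) ^ m ≤ 9 ^ (m+1) := by
            apply pow_le_pow_right₀ (by norm_num) (by omega)
          exact mul_le_mul_of_nonneg_right
            (mul_le_mul_of_nonneg_right this h2Nnn.le) (sq_nonneg Ch)
        have hcr : 6 * ((3:ℝ) ^ (2*m+1) * 2 ^ N * (Cg * Ch)) =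
            2 * (9 ^ (m+1) * 2 ^ N * (Cg * Ch)) := by rw [h9eq]; ring
        have expand : (9:ℝ) ^ (m+1) * 2 ^ N * (Cg + Ch) ^ 2 =
            9 ^ (m+1) * 2 ^ N * Cg ^ 2 + 2 * (9 ^ (m+1) * 2 ^ N * (Cg * Ch)) +
              9 ^ (m+1) * 2 ^ N * Ch ^ 2 := by ring
        rw [hcr, expand]
        linarith [hCh2]
      calc (∑ s : ι → Bool, g s ^ 4) + 6 * (∑ s : ι → Bool, g s ^ 2 * h s ^ 2) +
          ∑ s : ι → Bool, h s ^ 4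
          ≤ 9 ^ (m+1) * 2 ^ N * Cg ^ 2 + 6 * (3 ^ (2*m+1) * 2 ^ N * (Cg * Ch)) +
            9 ^ m * 2 ^ N * Ch ^ 2 := by
            gcongr
          _ ≤ 9 ^ (m+1) * 2 ^ N * (Cg + Ch) ^ 2 := key

end LPZ

open LPZ Finset

/-- Paley–Zygmund anti-concentration: For a multilinear Littlewood
polynomial `p` on `n` variables whose `w = |U| ≥ 1` monomials all have size at most `δ`,
the fraction of points of `{-1,1}^n` where `|p| > (1/2)√w` is at least `(9/16)·9^(-δ)`;
consequently `E|p| ≥ (9/32)·9^(-δ)·√w`. -/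
theorem littlewood_paley_zygmund
    (n δ : ℕ) (hn : 0 < n) (hδ : 0 < δ)
    (U : Finset (Finset (Fin n)))
    (hU : ∀ S ∈ U, S.Nonempty ∧ S.card ≤ δ) (hw : 1 ≤ U.card)
    (p : Finset (Fin n) → ℝ) (hsign : ∀ S ∈ U, p S = 1 ∨ p S = -1) :
    (9/16 : ℝ) * (9:ℝ) ^ (-(δ:ℤ)) ≤
        ((Finset.univ.filter (fun s : Fin n → Bool =>
            (1/2 : ℝ) * Real.sqrt U.card <
              |∑ S ∈ U, p S * ∏ i ∈ S, (if s i then (1:ℝ) else -1)|)).card : ℝ) /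
          2 ^ n ∧
      (9/32 : ℝ) * (9:ℝ) ^ (-(δ:ℤ)) * Real.sqrt U.card ≤
        (2:ℝ) ^ (-(n:ℤ)) *
          ∑ s : Fin n → Bool,
            |∑ S ∈ U, p S * ∏ i ∈ S, (if s i then (1:ℝ) else -1)| := by
  classical
  set w : ℝ := (U.card : ℝ) with hwdef
  have hw1 : (1:ℝ) ≤ w := by rw [hwdef]; exact_mod_cast hw
  have hw0 : (0:ℝ) < w := lt_of_lt_of_le one_pos hw1
  have h2n : (0:ℝ) < 2 ^ n := by positivity
  set f : (Fin n → Bool) → ℝ :=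
    fun s => ∑ S ∈ U, p S * ∏ i ∈ S, (if s i then (1:ℝ) else -1) with hfdef
  have hfchi : ∀ s, f s = ∑ S ∈ U, p S * chi S s := fun s => rfl
  have hsq : ∀ S ∈ U, p S ^ 2 = 1 := by
    intro S hS
    rcases hsign S hS with h | h <;> rw [h] <;> norm_num
  -- second moment
  have hP2 : ∑ s : Fin n → Bool, f s ^ 2 = 2 ^ n * w := by
    have := parseval U p
    rw [Fintype.card_fin] at this
    simp only [hfchi]
    rw [this, Finset.sum_congr rfl hsq, Finset.sum_const, nsmul_eq_mul, mul_one]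
  -- fourth moment
  set c : Finset (Fin n) → ℝ := fun S => if S ∈ U then p S else 0 with hcdef
  have hcover : ∀ s, ∑ S ∈ (Finset.univ : Finset (Fin n)).powerset, c S * chi S s
      = f s := by
    intro s
    rw [hfchi]
    simp only [hcdef, ite_mul, zero_mul]
    rw [Finset.sum_ite_mem, Finset.powerset_univ, Finset.univ_inter]
  have hcsq : ∑ S ∈ (Finset.univ : Finset (Fin n)).powerset, c S ^ 2 = w := by
    simp only [hcdef, apply_ite (· ^ 2)]
    rw [show ((0:ℝ) ^ 2) = 0 by norm_num]
    rw [Finset.sum_ite_mem, Finset.powerset_univ, Finset.univ_inter,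
      Finset.sum_congr rfl hsq, Finset.sum_const, nsmul_eq_mul, mul_one]
  have hP4 : ∑ s : Fin n → Bool, f s ^ 4 ≤ 9 ^ δ * 2 ^ n * w ^ 2 := by
    have hhc : ∀ S ∈ (Finset.univ : Finset (Fin n)).powerset, c S ≠ 0 → S.card ≤ δ := by
      intro S _ hcS
      by_cases hSU : S ∈ U
      · exact (hU S hSU).2
      · exact absurd (by simp [hcdef, hSU]) hcS
    have := hyper (Finset.univ : Finset (Fin n)) δ c hhc
    rw [Fintype.card_fin, hcsq] at this
    calc ∑ s : Fin n → Bool, f s ^ 4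
        = ∑ s : Fin n → Bool,
            (∑ S ∈ (Finset.univ : Finset (Fin n)).powerset, c S * chi S s) ^ 4 := by
          exact Finset.sum_congr rfl fun s _ => by rw [hcover]
      _ ≤ 9 ^ δ * 2 ^ n * w ^ 2 := this
  -- the large set
  set B := Finset.univ.filter (fun s : Fin n → Bool =>
      (1/2 : ℝ) * Real.sqrt w < |f s|) with hBdef
  set β : ℝ := (B.card : ℝ) with hβdef
  have hβnn : (0:ℝ) ≤ β := Nat.cast_nonneg _
  have hsqw : ((1/2 : ℝ) * Real.sqrt w) ^ 2 = w / 4 := by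
    rw [mul_pow, Real.sq_sqrt hw0.le]
    ring
  -- sum over complement
  have hsplitB : ∑ s ∈ B, f s ^ 2 +
      ∑ s ∈ Finset.univ.filter (fun s : Fin n → Bool =>
        ¬ ((1/2 : ℝ) * Real.sqrt w < |f s|)), f s ^ 2
      = 2 ^ n * w := by
    rw [Finset.sum_filter_add_sum_filter_not, hP2]
  have hcomp : ∑ s ∈ Finset.univ.filter (fun s : Fin n → Bool =>
      ¬ ((1/2 : ℝ) * Real.sqrt w < |f s|)), f s ^ 2 ≤ 2 ^ n * (w / 4) := by
    have hbound : ∀ s ∈ Finset.univ.filter (fun s : Fin n → Bool =>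
        ¬ ((1/2 : ℝ) * Real.sqrt w < |f s|)), f s ^ 2 ≤ w / 4 := by
      intro s hs
      have hle : |f s| ≤ (1/2 : ℝ) * Real.sqrt w := not_lt.1 (Finset.mem_filter.1 hs).2
      calc f s ^ 2 = |f s| ^ 2 := (sq_abs _).symm
        _ ≤ ((1/2 : ℝ) * Real.sqrt w) ^ 2 := by
            apply pow_le_pow_left₀ (abs_nonneg _) hle
        _ = w / 4 := hsqw
    calc ∑ s ∈ Finset.univ.filter (fun s : Fin n → Bool =>
        ¬ ((1/2 : ℝ) * Real.sqrt w < |f s|)), f s ^ 2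
        ≤ ∑ _s ∈ Finset.univ.filter (fun s : Fin n → Bool =>
            ¬ ((1/2 : ℝ) * Real.sqrt w < |f s|)), (w / 4) := Finset.sum_le_sum hbound
      _ = (Finset.univ.filter (fun s : Fin n → Bool =>
            ¬ ((1/2 : ℝ) * Real.sqrt w < |f s|))).card * (w / 4) := by
          rw [Finset.sum_const, nsmul_eq_mul]
      _ ≤ 2 ^ n * (w / 4) := by
          have hcard : ((Finset.univ.filter (fun s : Fin n → Bool =>
              ¬ ((1/2 : ℝ) * Real.sqrt w < |f s|))).card : ℝ) ≤ 2 ^ n := by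
            have := Finset.card_filter_le (Finset.univ : Finset (Fin n → Bool))
              (fun s => ¬ ((1/2 : ℝ) * Real.sqrt w < |f s|))
            have hcu : (Finset.univ : Finset (Fin n → Bool)).card = 2 ^ n := by
              rw [Finset.card_univ, Fintype.card_fun, Fintype.card_bool, Fintype.card_fin]
            calc ((Finset.univ.filter (fun s : Fin n → Bool =>
                ¬ ((1/2 : ℝ) * Real.sqrt w < |f s|))).card : ℝ)
                ≤ ((Finset.univ : Finset (Fin n → Bool)).card : ℝ) := by exact_mod_cast this
              _ = 2 ^ n := by rw [hcu]; push_cast; ring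
          have : (0:ℝ) ≤ w / 4 := by positivity
          exact mul_le_mul_of_nonneg_right hcard this
  have hB2 : (3/4 : ℝ) * (2 ^ n * w) ≤ ∑ s ∈ B, f s ^ 2 := by linarith
  -- Cauchy–Schwarz on B
  have hCS : (∑ s ∈ B, f s ^ 2) ^ 2 ≤ β * ∑ s : Fin n → Bool, f s ^ 4 := by
    have h1 := Finset.sum_mul_sq_le_sq_mul_sq B (fun _ => (1:ℝ)) (fun s => f s ^ 2)
    simp only [one_pow, one_mul] at h1
    calc (∑ s ∈ B, f s ^ 2) ^ 2
        ≤ (∑ _s ∈ B, (1:ℝ)) * ∑ s ∈ B, (f s ^ 2) ^ 2 := h1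
      _ = β * ∑ s ∈ B, f s ^ 4 := by
          rw [Finset.sum_const, nsmul_eq_mul, mul_one]
          norm_num [← pow_mul]
          exact Or.inl hβdef.symm
      _ ≤ β * ∑ s : Fin n → Bool, f s ^ 4 := by
          apply mul_le_mul_of_nonneg_left _ hβnn
          apply Finset.sum_le_sum_of_subset_of_nonneg (Finset.filter_subset _ _)
          intro s _ _
          positivity
  -- master inequality
  have master : (9/16 : ℝ) * 2 ^ n * (2 ^ n * w ^ 2) ≤ β * 9 ^ δ * (2 ^ n * w ^ 2) := by
    have h1 : ((3/4 : ℝ) * (2 ^ n * w)) ^ 2 ≤ (∑ s ∈ B, f s ^ 2) ^ 2 :=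
      pow_le_pow_left₀ (by positivity) hB2 2
    have h2 : β * ∑ s : Fin n → Bool, f s ^ 4 ≤ β * (9 ^ δ * 2 ^ n * w ^ 2) :=
      mul_le_mul_of_nonneg_left hP4 hβnn
    calc (9/16 : ℝ) * 2 ^ n * (2 ^ n * w ^ 2) = ((3/4 : ℝ) * (2 ^ n * w)) ^ 2 := by ring
      _ ≤ (∑ s ∈ B, f s ^ 2) ^ 2 := h1
      _ ≤ β * ∑ s : Fin n → Bool, f s ^ 4 := hCS
      _ ≤ β * (9 ^ δ * 2 ^ n * w ^ 2) := h2
      _ = β * 9 ^ δ * (2 ^ n * w ^ 2) := by ring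
  have hmain : (9/16 : ℝ) * 2 ^ n ≤ β * 9 ^ δ := by
    have hpos : (0:ℝ) < 2 ^ n * w ^ 2 := by positivity
    exact le_of_mul_le_mul_right (by linarith [master]) hpos
  have hzpow9 : (9:ℝ) ^ (-(δ:ℤ)) = ((9:ℝ) ^ δ)⁻¹ := by
    rw [zpow_neg, zpow_natCast]
  have h9pos : (0:ℝ) < (9:ℝ) ^ δ := by positivity
  have part1 : (9/16 : ℝ) * (9:ℝ) ^ (-(δ:ℤ)) ≤ β / 2 ^ n := by
    rw [hzpow9, ← div_eq_mul_inv]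
    rw [div_le_div_iff₀ h9pos h2n]
    linarith [hmain]
  refine ⟨part1, ?_⟩
  -- second part
  have habs : β * ((1/2 : ℝ) * Real.sqrt w) ≤ ∑ s : Fin n → Bool, |f s| := by
    calc β * ((1/2 : ℝ) * Real.sqrt w)
        = ∑ _s ∈ B, ((1/2 : ℝ) * Real.sqrt w) := by
          rw [Finset.sum_const, nsmul_eq_mul]
      _ ≤ ∑ s ∈ B, |f s| := by
          apply Finset.sum_le_sum
          intro s hs
          exact le_of_lt (Finset.mem_filter.1 hs).2
      _ ≤ ∑ s : Fin n → Bool, |f s| := by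
          apply Finset.sum_le_sum_of_subset_of_nonneg (Finset.filter_subset _ _)
          intro s _ _
          exact abs_nonneg _
  have hzpow2 : (2:ℝ) ^ (-(n:ℤ)) = ((2:ℝ) ^ n)⁻¹ := by
    rw [zpow_neg, zpow_natCast]
  rw [hzpow2]
  have hsqrtnn : (0:ℝ) ≤ Real.sqrt w := Real.sqrt_nonneg _
  calc (9/32 : ℝ) * (9:ℝ) ^ (-(δ:ℤ)) * Real.sqrt w
      = ((9/16 : ℝ) * (9:ℝ) ^ (-(δ:ℤ))) * ((1/2 : ℝ) * Real.sqrt w) := by ring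
    _ ≤ (β / 2 ^ n) * ((1/2 : ℝ) * Real.sqrt w) := by
        apply mul_le_mul_of_nonneg_right part1 (by positivity)
    _ = ((2:ℝ) ^ n)⁻¹ * (β * ((1/2 : ℝ) * Real.sqrt w)) := by ring
    _ ≤ ((2:ℝ) ^ n)⁻¹ * ∑ s : Fin n → Bool, |f s| := by
        apply mul_le_mul_of_nonneg_left habs (by positivity)
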